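/- For every $w$ in the open unit disk of $\mathbb{C}$ and every real $\alpha$ with $|\alpha|\le 2(\sqrt2-1)$, one has $1+|w|^2+|w|^4+|w|^6+\alpha(1+|w|^2+|w|^4)\operatorname{Re}(w)-\alpha\operatorname{Re}(w^3)>0$. -/

import Mathlib

/-- Key positivity estimate: for `|w| < 1` and `|α| ≤ 2(√2-1)`,
`1+|w|²+|w|⁴+|w|⁶+α(1+|w|²+|w|⁴)Re(w)-αRe(w³) > 0`. -/
theorem stmt_7 (w : ℂ) (hw : ‖w‖ < 1) (α : ℝ) (hα : |α| ≤ 2 * (Real.sqrt 2 - 1)) :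
    0 < 1 + ‖w‖ ^ 2 + ‖w‖ ^ 4 + ‖w‖ ^ 6 +
      α * (1 + ‖w‖ ^ 2 + ‖w‖ ^ 4) * w.re - α * (w ^ 3).re := by
  set r := ‖w‖ with hr
  have hr0 : 0 ≤ r := norm_nonneg w
  have hre : |w.re| ≤ r := by
    simpa [hr] using Complex.abs_re_le_norm w
  have hre3 : |(w ^ 3).re| ≤ r ^ 3 := by
    have h := Complex.abs_re_le_norm (w ^ 3)
    rw [norm_pow] at h
    simpa [hr] using h
  have hc : 2 * (Real.sqrt 2 - 1) < 1 := by
    nlinarith [Real.sq_sqrt (by norm_num : (2:ℝ) ≥ 0), Real.sqrt_nonneg 2]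
  have hα1 : |α| < 1 := lt_of_le_of_lt hα hc
  have hs : 0 ≤ 1 + r ^ 2 + r ^ 4 := by positivity
  have h1 : α * (1 + r ^ 2 + r ^ 4) * w.re ≥ -(|α| * ((1 + r ^ 2 + r ^ 4) * r)) := by
    have : |α * (1 + r ^ 2 + r ^ 4) * w.re| ≤ |α| * ((1 + r ^ 2 + r ^ 4) * r) := by
      rw [abs_mul, abs_mul, abs_of_nonneg hs, mul_assoc]
      gcongr
    linarith [neg_abs_le (α * (1 + r ^ 2 + r ^ 4) * w.re)]
  have h2 : α * (w ^ 3).re ≤ |α| * r ^ 3 := by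
    calc α * (w ^ 3).re ≤ |α * (w ^ 3).re| := le_abs_self _
      _ = |α| * |(w ^ 3).re| := abs_mul _ _
      _ ≤ |α| * r ^ 3 := by gcongr
  have key : |α| * ((1 + r ^ 2 + r ^ 4) * r) + |α| * r ^ 3 < 1 + r ^ 2 + r ^ 4 + r ^ 6 := by
    have habs : 0 ≤ |α| := abs_nonneg α
    have hr3 : r ^ 3 < 1 := by nlinarith
    nlinarith [mul_pos (mul_pos (sub_pos.2 hw) (sub_pos.2 hr3)) (by positivity : (0:ℝ) < 1 + r ^ 2),
      mul_nonneg (sub_nonneg.2 hα1.le) (by positivity : (0:ℝ) ≤ r + 2 * r ^ 3 + r ^ 5)]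
  linarith
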